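/- Let $X$ be a compact metric space and let $K$ be a CW-complex (or more concretely, take $K = S^n$). If every connected component of $X$ has covering dimension at most $n$, then $X$ has covering dimension at most $n$. -/
import Mathlib


open Set Metric

def CovDimLE (X : Type*) [TopologicalSpace X] (n : ℕ) : Prop :=
  ∀ (ι : Type) (U : ι → Set X), (∀ i, IsOpen (U i)) → (⋃ i, U i) = Set.univ →
    ∃ (κ : Type) (V : κ → Set X),
      (∀ j, IsOpen (V j)) ∧ (⋃ j, V j) = Set.univ ∧ (∀ j, ∃ i, V j ⊆ U i) ∧
      ∀ x : X, {j | x ∈ V j}.Finite ∧ {j | x ∈ V j}.ncard ≤ n + 1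

/-- In a compact Hausdorff space, a clopen set can be interpolated between a connected
component and an open set containing it. -/
lemma exists_clopen_between {X : Type*} [TopologicalSpace X] [CompactSpace X] [T2Space X]
    (x : X) {O : Set X} (hO : IsOpen O) (hCO : connectedComponent x ⊆ O) :
    ∃ A : Set X, IsClopen A ∧ x ∈ A ∧ A ⊆ O := by
  rw [connectedComponent_eq_iInter_isClopen] at hCO
  have hcov : Oᶜ ⊆ ⋃ s : {s : Set X // IsClopen s ∧ x ∈ s}, (↑s : Set X)ᶜ := by
    intro y hy
    by_contra h
    simp only [mem_iUnion, mem_compl_iff, not_exists, not_not] at h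
    exact hy (hCO (mem_iInter.2 fun s => h s))
  obtain ⟨t, ht⟩ := (hO.isClosed_compl.isCompact).elim_finite_subcover
    (fun s : {s : Set X // IsClopen s ∧ x ∈ s} => (↑s : Set X)ᶜ)
    (fun s => s.2.1.compl.isOpen) hcov
  refine ⟨⋂ s ∈ t, ↑s, isClopen_biInter_finset fun s _ => s.2.1,
    mem_iInter₂.2 fun s _ => s.2.2, ?_⟩
  intro y hy
  by_contra hyO
  obtain ⟨s, hs, hys⟩ := mem_iUnion₂.1 (ht hyO)
  exact hys (mem_iInter₂.1 hy s hs)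

/-- If every `(n+2)`-fold intersection of a finite family is empty, then the multiplicity of
the family at any point is at most `n+1`. -/
lemma ncard_le_of_inter_empty {X : Type*} {m n : ℕ} (G : Fin m → Set X)
    (h : ∀ S : Finset (Fin m), S.card = n + 2 → ⋂ j ∈ S, G j = ∅) (z : X) :
    {j | z ∈ G j}.ncard ≤ n + 1 := by
  by_contra hlt
  push_neg at hlt
  have hfin : {j | z ∈ G j}.Finite := Set.toFinite _
  have hcard : n + 2 ≤ hfin.toFinset.card := by
    rw [← Set.ncard_eq_toFinset_card _ hfin]; omega
  obtain ⟨S, hSsub, hScard⟩ := Finset.exists_subset_card_eq hcard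
  have : z ∈ ⋂ j ∈ S, G j := by
    refine mem_iInter₂.2 fun j hj => ?_
    have := hSsub hj
    rwa [Set.Finite.mem_toFinset] at this
  rw [h S hScard] at this
  exact this

/-- Key local lemma: around every point there is a clopen set carrying a finite open family
refining `U`, covering it, with multiplicity at most `n+1` everywhere. -/
lemma exists_clopen_refinement {X : Type*} [MetricSpace X] [CompactSpace X] (n : ℕ)
    {ι : Type} (U : ι → Set X) (hUo : ∀ i, IsOpen (U i)) (hUc : (⋃ i, U i) = univ)
    (x : X) (hx : CovDimLE ↥(connectedComponent x) n) :
    ∃ A : Set X, IsClopen A ∧ x ∈ A ∧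
      ∃ (m : ℕ) (G : Fin m → Set X), (∀ j, IsOpen (G j)) ∧ A ⊆ ⋃ j, G j ∧
        (∀ j, ∃ i, G j ⊆ U i) ∧ ∀ z : X, {j | z ∈ G j}.ncard ≤ n + 1 := by
  classical
  set C := connectedComponent x with hC
  have hCcl : IsClosed C := isClosed_connectedComponent
  have hCcpt : IsCompact C := hCcl.isCompact
  haveI : CompactSpace ↥C := isCompact_iff_compactSpace.mp hCcpt
  -- apply the dimension hypothesis on the component
  obtain ⟨κ, V, hVo, hVc, hVref, hVmul⟩ := hx ι (fun i => Subtype.val ⁻¹' U i)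
    (fun i => (hUo i).preimage continuous_subtype_val)
    (by rw [← preimage_iUnion, hUc, preimage_univ])
  -- finite subcover on the compact component
  obtain ⟨t, ht⟩ := isCompact_univ.elim_finite_subcover V hVo (by rw [hVc])
  set m := t.card with hm
  let e : Fin m → κ := fun j => (t.equivFin.symm j : κ)
  have he_inj : Function.Injective e := fun a b hab => by
    have := Subtype.val_injective hab
    exact t.equivFin.symm.injective this
  have hecov : (univ : Set ↥C) ⊆ ⋃ j, V (e j) := by
    intro z hz
    obtain ⟨j, hjt, hzj⟩ := mem_iUnion₂.1 (ht hz)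
    refine mem_iUnion.2 ⟨t.equivFin ⟨j, hjt⟩, ?_⟩
    simpa [e] using hzj
  -- shrink to a closed cover
  obtain ⟨v, hvcov, hvo, hvcl⟩ := exists_subset_iUnion_closure_subset isClosed_univ
    (fun j : Fin m => hVo (e j)) (fun z _ => Set.toFinite _) hecov
  -- the compact pieces in X
  let F : Fin m → Set X := fun j => Subtype.val '' closure (v j)
  have hFcpt : ∀ j, IsCompact (F j) :=
    fun j => (isClosed_closure.isCompact).image continuous_subtype_val
  -- choose target open sets
  choose i hi using fun j : Fin m => hVref (e j)
  choose W₀ hW₀o hW₀e using fun j : Fin m => isOpen_induced_iff.mp (hVo (e j))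
  let W : Fin m → Set X := fun j => W₀ j ∩ U (i j)
  have hWo : ∀ j, IsOpen (W j) := fun j => (hW₀o j).inter (hUo (i j))
  have hFW : ∀ j, F j ⊆ W j := by
    rintro j y ⟨c, hc, rfl⟩
    have hcV : c ∈ V (e j) := hvcl j hc
    constructor
    · rw [← hW₀e j] at hcV; exact hcV
    · exact hi j hcV
  have hCF : C ⊆ ⋃ j, F j := by
    intro c hc
    obtain ⟨j, hj⟩ := mem_iUnion.1 (hvcov (mem_univ (⟨c, hc⟩ : ↥C)))
    exact mem_iUnion.2 ⟨j, ⟨⟨c, hc⟩, subset_closure hj, rfl⟩⟩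
  -- empty (n+2)-fold intersections of the F's
  have hFS : ∀ S : Finset (Fin m), S.card = n + 2 → ⋂ j ∈ S, F j = ∅ := by
    intro S hScard
    rw [Set.eq_empty_iff_forall_notMem]
    intro y hy
    obtain ⟨j₀, hj₀⟩ := Finset.card_pos.mp (by omega : 0 < S.card)
    obtain ⟨c₀, _, hc₀⟩ := mem_iInter₂.1 hy j₀ hj₀
    have hyC : y ∈ C := by rw [← hc₀]; exact c₀.2
    have hyV : ∀ j ∈ S, (⟨y, hyC⟩ : ↥C) ∈ V (e j) := by
      intro j hj
      obtain ⟨c, hc, hcy⟩ := mem_iInter₂.1 hy j hj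
      have : c = (⟨y, hyC⟩ : ↥C) := Subtype.ext hcy
      rw [← this]
      exact hvcl j hc
    have hsub : (↑(S.image e) : Set κ) ⊆ {j' | (⟨y, hyC⟩ : ↥C) ∈ V j'} := by
      intro j' hj'
      simp only [Finset.coe_image, mem_image, Finset.mem_coe] at hj'
      obtain ⟨j, hj, rfl⟩ := hj'
      exact hyV j hj
    have h1 : (S.image e).card = n + 2 := by
      rw [Finset.card_image_of_injective _ he_inj, hScard]
    have h2 := Set.ncard_le_ncard hsub (hVmul (⟨y, hyC⟩ : ↥C)).1
    rw [Set.ncard_coe_finset, h1] at h2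
    have h3 := (hVmul (⟨y, hyC⟩ : ↥C)).2
    omega
  -- m is positive since the component is nonempty
  have hm0 : 0 < m := by
    obtain ⟨j, _⟩ := mem_iUnion.1 (hCF mem_connectedComponent)
    exact j.pos
  haveI : Nonempty (Fin m) := ⟨⟨0, hm0⟩⟩
  -- thickening radii keeping inside W
  choose δ hδpos hδW using fun j =>
    (hFcpt j).exists_thickening_subset_open (hWo j) (hFW j)
  -- thickening radii keeping (n+2)-fold intersections empty
  have key : ∀ S : Finset (Fin m), ∃ ε : ℝ, 0 < ε ∧
      (S.card = n + 2 → ⋂ j ∈ S, thickening ε (F j) = ∅) := by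
    intro S
    by_cases hScard : S.card = n + 2
    · by_contra hne
      push_neg at hne
      have hne' : ∀ ε : ℝ, 0 < ε → (⋂ j ∈ S, thickening ε (F j)).Nonempty :=
        fun ε hε => (hne ε hε).2
      set D : ℕ → Set X := fun k => ⋂ j ∈ S, cthickening (1 / (k + 1)) (F j) with hD
      have hDne : ∀ k, (D k).Nonempty := by
        intro k
        obtain ⟨z, hz⟩ := hne' (1 / (k + 1)) (by positivity)
        exact ⟨z, mem_iInter₂.2 fun j hj =>
          thickening_subset_cthickening _ _ (mem_iInter₂.1 hz j hj)⟩
      have hDcl : ∀ k, IsClosed (D k) :=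
        fun k => isClosed_biInter fun j _ => isClosed_cthickening
      have hDanti : ∀ k, D (k + 1) ⊆ D k := by
        intro k
        refine iInter₂_mono fun j _ => cthickening_mono ?_ _
        have h1 : (0:ℝ) < (k:ℝ) + 1 := by positivity
        rw [div_le_div_iff₀ (by positivity) h1]
        push_cast; nlinarith
      obtain ⟨z, hz⟩ := IsCompact.nonempty_iInter_of_sequence_nonempty_isCompact_isClosed
        D hDanti hDne ((hDcl 0).isCompact) hDcl
      have hzF : ∀ j ∈ S, z ∈ F j := by
        intro j hj
        have : z ∈ closure (F j) := by
          rw [closure_eq_iInter_cthickening]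
          refine mem_iInter₂.2 fun ε hε => ?_
          obtain ⟨k, hk⟩ := exists_nat_one_div_lt hε
          exact cthickening_mono hk.le _
            (mem_iInter₂.1 (mem_iInter.1 hz k) j hj)
        rwa [(hFcpt j).isClosed.closure_eq] at this
      have : z ∈ ⋂ j ∈ S, F j := mem_iInter₂.2 hzF
      rw [hFS S hScard] at this
      exact this
    · exact ⟨1, one_pos, fun h => absurd h hScard⟩
  choose εS hεSpos hεS using key
  -- the final radius
  set ε : ℝ := min (Finset.univ.inf' Finset.univ_nonempty δ)
    (Finset.univ.inf' Finset.univ_nonempty εS) with hε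
  have hεpos : 0 < ε := by
    refine lt_min ?_ ?_ <;> rw [Finset.lt_inf'_iff] <;> intro a _
    · exact hδpos a
    · exact hεSpos a
  have hεδ : ∀ j, ε ≤ δ j := fun j =>
    (min_le_left _ _).trans (Finset.inf'_le _ (Finset.mem_univ j))
  have hεεS : ∀ S, ε ≤ εS S := fun S =>
    (min_le_right _ _).trans (Finset.inf'_le _ (Finset.mem_univ S))
  let G : Fin m → Set X := fun j => thickening ε (F j)
  have hGo : ∀ j, IsOpen (G j) := fun j => isOpen_thickening
  have hGU : ∀ j, G j ⊆ U (i j) := fun j =>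
    ((thickening_mono (hεδ j) _).trans (hδW j)).trans inter_subset_right
  have hCG : C ⊆ ⋃ j, G j := by
    intro c hc
    obtain ⟨j, hj⟩ := mem_iUnion.1 (hCF hc)
    exact mem_iUnion.2 ⟨j, self_subset_thickening hεpos _ hj⟩
  have hGmul : ∀ z : X, {j | z ∈ G j}.ncard ≤ n + 1 := by
    refine ncard_le_of_inter_empty G (fun S hS => ?_)
    have h1 : ⋂ j ∈ S, G j ⊆ ⋂ j ∈ S, thickening (εS S) (F j) :=
      iInter₂_mono fun j _ => thickening_mono (hεεS S) _
    rw [← Set.subset_empty_iff]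
    calc ⋂ j ∈ S, G j ⊆ ⋂ j ∈ S, thickening (εS S) (F j) := h1
      _ = ∅ := hεS S hS
  obtain ⟨A, hAcl, hxA, hAO⟩ := exists_clopen_between x (isOpen_iUnion hGo) hCG
  exact ⟨A, hAcl, hxA, m, G, hGo, hAO, fun j => ⟨i j, hGU j⟩, hGmul⟩

theorem dim_le_of_components {X : Type*} [MetricSpace X] [CompactSpace X] (n : ℕ)
    (hcomp : ∀ x : X, CovDimLE ↥(connectedComponent x) n) :
    CovDimLE X n := by
  classical
  intro ι U hUo hUc
  choose A hAcl hxA m G hGo hAG hGU hGmul using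
    fun x => exists_clopen_refinement n U hUo hUc x (hcomp x)
  obtain ⟨t, ht⟩ := isCompact_univ.elim_finite_subcover A (fun x => (hAcl x).isOpen)
    (fun z _ => mem_iUnion.2 ⟨z, hxA z⟩)
  set k := t.card with hk
  let pt : Fin k → X := fun i => (t.equivFin.symm i : X)
  let B : Fin k → Set X := fun i =>
    A (pt i) \ ⋃ i' ∈ Finset.univ.filter (· < i), A (pt i')
  have hBcl : ∀ i, IsClopen (B i) := fun i =>
    (hAcl (pt i)).diff (isClopen_biUnion_finset fun i' _ => hAcl (pt i'))
  -- each point lies in a unique `B i`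
  have hBex : ∀ z : X, ∃ i, z ∈ B i := by
    intro z
    have hzA : ∃ i, z ∈ A (pt i) := by
      obtain ⟨y, hyt, hzy⟩ := mem_iUnion₂.1 (ht (mem_univ z))
      refine ⟨t.equivFin ⟨y, hyt⟩, ?_⟩
      simpa [pt] using hzy
    obtain ⟨i₀, hi₀, hmin⟩ :=
      (Finset.univ.filter fun i => z ∈ A (pt i)).exists_min_image id
        (by obtain ⟨i, hi⟩ := hzA; exact ⟨i, Finset.mem_filter.2 ⟨Finset.mem_univ i, hi⟩⟩)
    refine ⟨i₀, (Finset.mem_filter.1 hi₀).2, ?_⟩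
    intro hmem
    obtain ⟨i', hi', hzi'⟩ := mem_iUnion₂.1 hmem
    rw [Finset.mem_filter] at hi'
    have := hmin i' (Finset.mem_filter.2 ⟨Finset.mem_univ i', hzi'⟩)
    simp only [id] at this
    exact absurd hi'.2 (not_lt.2 this)
  have hBuniq : ∀ z : X, ∀ i i', z ∈ B i → z ∈ B i' → i = i' := by
    intro z i i' hi hi'
    by_contra hne
    rcases lt_or_gt_of_ne hne with h | h
    · exact hi'.2 (mem_iUnion₂.2 ⟨i, Finset.mem_filter.2 ⟨Finset.mem_univ i, h⟩, hi.1⟩)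
    · exact hi.2 (mem_iUnion₂.2 ⟨i', Finset.mem_filter.2 ⟨Finset.mem_univ i', h⟩, hi'.1⟩)
  refine ⟨(i : Fin k) × Fin (m (pt i)), fun p => B p.1 ∩ G (pt p.1) p.2, ?_, ?_, ?_, ?_⟩
  · exact fun p => ((hBcl p.1).isOpen).inter (hGo (pt p.1) p.2)
  · rw [eq_univ_iff_forall]
    intro z
    obtain ⟨i₀, hi₀⟩ := hBex z
    obtain ⟨j, hj⟩ := mem_iUnion.1 (hAG (pt i₀) hi₀.1)
    exact mem_iUnion.2 ⟨⟨i₀, j⟩, hi₀, hj⟩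
  · exact fun p => (hGU (pt p.1) p.2).imp fun i hi => (inter_subset_right).trans hi
  · intro z
    refine ⟨Set.toFinite _, ?_⟩
    obtain ⟨i₀, hi₀⟩ := hBex z
    have hsub : {p : (i : Fin k) × Fin (m (pt i)) | z ∈ B p.1 ∩ G (pt p.1) p.2} ⊆
        Sigma.mk i₀ '' {j | z ∈ G (pt i₀) j} := by
      rintro ⟨i, j⟩ ⟨hB, hG⟩
      obtain rfl : i = i₀ := hBuniq z i i₀ hB hi₀
      exact ⟨j, hG, rfl⟩
    calc {p : (i : Fin k) × Fin (m (pt i)) | z ∈ B p.1 ∩ G (pt p.1) p.2}.ncard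
        ≤ (Sigma.mk i₀ '' {j | z ∈ G (pt i₀) j}).ncard :=
          Set.ncard_le_ncard hsub (Set.toFinite _)
      _ = {j | z ∈ G (pt i₀) j}.ncard :=
          Set.ncard_image_of_injective _ sigma_mk_injective
      _ ≤ n + 1 := hGmul (pt i₀) z
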